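/- Let j : U ↪ X be an open dense immersion with U regular, and suppose the motivic intersection complex j_{!*}1_U ∈ CHM(X) exists in the weaker sense (j^*j_{!*}1_U ≅ 1_U and the kernel of End(j_{!*}1_U) → End(1_U) is nilpotent). If M ∈ CHM(X) is such that 1_U is a direct summand of j^*M, then j_{!*}1_U is a direct summand of M. -/
import Mathlib


/- STATEMENT 14: Let j : U ↪ X be an open dense immersion with U regular, and suppose the
motivic intersection complex j_{!*}1_U ∈ CHM(X) exists in the weaker sense. If M ∈ CHM(X)
is such that 1_U is a direct summand of j^*M, then j_{!*}1_U is a direct summand of M.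

CHM(X) and CHM(U) are modeled by abstract preadditive categories `CX`, `CU`, and j^* by a
full additive functor `jstar` (j^* : CHM(X) → CHM(U) is full). `IM` stands for j_{!*}1_U and
`oneU` for 1_U; the weaker-sense hypotheses are: j^* IM ≅ 1_U and every endomorphism of IM
killed by j^* is nilpotent (the kernel of End(IM) → End(1_U) is a nilpotent ideal, so in
particular each of its elements is nilpotent, which is what the proof uses). -/

open CategoryTheory Category Limits

theorem stmt14 {CX CU : Type*} [Category CX] [Category CU] [Preadditive CX] [Preadditive CU]
    (jstar : CX ⥤ CU) [jstar.Additive] [jstar.Full]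
    (IM M : CX) (oneU : CU)
    (e : jstar.obj IM ≅ oneU)
    (hker : ∀ f : End IM, jstar.map f = 0 → ∃ n : ℕ, f ^ n = 0)
    (hsummand : ∃ (α : oneU ⟶ jstar.obj M) (β : jstar.obj M ⟶ oneU), α ≫ β = 𝟙 oneU) :
    ∃ (s : IM ⟶ M) (r : M ⟶ IM), s ≫ r = 𝟙 IM := by
  obtain ⟨α, β, hβα⟩ := hsummand
  obtain ⟨s₀, hs₀⟩ := jstar.map_surjective (e.hom ≫ α)
  obtain ⟨r₀, hr₀⟩ := jstar.map_surjective (β ≫ e.inv)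
  set f : End IM := 𝟙 IM - s₀ ≫ r₀ with hf
  have hmap : jstar.map f = 0 := by
    simp only [hf, Functor.map_sub, Functor.map_id, Functor.map_comp, hs₀, hr₀]
    rw [assoc, ← assoc α, hβα, id_comp, e.hom_inv_id]
    simp
  obtain ⟨n, hn⟩ := hker f hmap
  have hnil : IsNilpotent f := ⟨n, hn⟩
  obtain ⟨u, hu⟩ := hnil.isUnit_one_sub
  have hg : (u : End IM) = s₀ ≫ r₀ := by
    rw [hu, hf, End.one_def, sub_sub_cancel]
  refine ⟨s₀, r₀ ≫ (↑u⁻¹ : End IM), ?_⟩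
  have : (↑u⁻¹ : End IM) * (u : End IM) = 1 := u.inv_mul
  calc s₀ ≫ r₀ ≫ (↑u⁻¹ : End IM) = (s₀ ≫ r₀) ≫ (↑u⁻¹ : End IM) := by rw [assoc]
    _ = (↑u⁻¹ : End IM) * (u : End IM) := by rw [hg]; rfl
    _ = 𝟙 IM := by rw [u.inv_mul]; rfl
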